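/- arXiv:2302.10148 — 4 statements merged into one kernel-verified Lean document; each statement's English description precedes it below -/
import Mathlib

section
/- Let $X$ be a binomial random variable with parameters $n$ and $k/n$, where $0 \le k \le n$ are integers and $n \ge 1$. Then $\mathbb{P}(X = k) \ge 1/(n+1)$. -/
/-- Lemma: for `X ~ Bi(n, k/n)` with `0 ≤ k ≤ n`, `n ≥ 1`, we have `ℙ(X = k) ≥ 1/(n+1)`. -/
theorem binomial_prob_at_mean_ge (n k : ℕ) (hn : 1 ≤ n) (hk : k ≤ n) :
    (1 : ℝ) / (n + 1) ≤
      (n.choose k : ℝ) * ((k : ℝ) / n) ^ k * (1 - (k : ℝ) / n) ^ (n - k) := by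
  set t : ℕ → ℕ := fun j => n.choose j * k ^ j * (n - k) ^ (n - j) with ht
  have key : ∀ j, j < n → t (j+1) * ((j+1) * (n-k)) = t j * ((n-j) * k) := by
    intro j hj
    have h1 : n.choose (j+1) * (j+1) = n.choose j * (n - j) :=
      Nat.choose_succ_right_eq n j
    have h2 : n - j = (n - (j+1)) + 1 := by omega
    simp only [ht]
    calc n.choose (j+1) * k ^ (j+1) * (n-k) ^ (n-(j+1)) * ((j+1) * (n-k))
        = (n.choose (j+1) * (j+1)) * (k ^ j * k) * ((n-k) ^ (n-(j+1)) * (n-k)) := by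
          rw [pow_succ]; ring
      _ = (n.choose j * (n - j)) * (k ^ j * k) * ((n-k) ^ (n-j)) := by
          rw [h1, h2, pow_succ]
      _ = n.choose j * k ^ j * (n-k) ^ (n-j) * ((n-j) * k) := by ring
  have up : ∀ j, j < k → t j ≤ t (j+1) := by
    intro j hj
    have hjn : j < n := lt_of_lt_of_le hj hk
    have hle : (j+1) * (n-k) ≤ (n-j) * k := by
      rw [mul_comm (n-j) k]
      exact Nat.mul_le_mul (by omega) (by omega)
    have hmul : t j * ((n-j) * k) ≤ t (j+1) * ((n-j) * k) := by
      calc t j * ((n-j) * k) = t (j+1) * ((j+1) * (n-k)) := (key j hjn).symm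
        _ ≤ t (j+1) * ((n-j) * k) := Nat.mul_le_mul_left _ hle
    exact Nat.le_of_mul_le_mul_right hmul (Nat.mul_pos (by omega) (by omega))
  have down : ∀ j, k ≤ j → j < n → t (j+1) ≤ t j := by
    intro j hjk hjn
    have hle : (n-j) * k ≤ (j+1) * (n-k) := by
      rw [mul_comm (j+1) (n-k)]
      exact Nat.mul_le_mul (by omega) (by omega)
    have hmul : t (j+1) * ((j+1) * (n-k)) ≤ t j * ((j+1) * (n-k)) := by
      calc t (j+1) * ((j+1) * (n-k)) = t j * ((n-j) * k) := key j hjn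
        _ ≤ t j * ((j+1) * (n-k)) := Nat.mul_le_mul_left _ hle
    exact Nat.le_of_mul_le_mul_right hmul (Nat.mul_pos (by omega) (by omega))
  have hA : ∀ m, m ≤ k → t (k - m) ≤ t k := by
    intro m
    induction m with
    | zero => simp
    | succ m ih =>
      intro hm
      have h2 : k - (m+1) + 1 = k - m := by omega
      calc t (k - (m+1)) ≤ t (k - (m+1) + 1) := up _ (by omega)
        _ = t (k - m) := by rw [h2]
        _ ≤ t k := ih (by omega)
  have hB : ∀ m, k + m ≤ n → t (k + m) ≤ t k := by
    intro m
    induction m with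
    | zero => simp
    | succ m ih =>
      intro hm
      have : t (k + m + 1) ≤ t (k + m) := down (k + m) (by omega) (by omega)
      calc t (k + (m+1)) = t (k + m + 1) := by ring_nf
        _ ≤ t (k + m) := this
        _ ≤ t k := ih (by omega)
  have hmax : ∀ j ∈ Finset.range (n+1), t j ≤ t k := by
    intro j hj
    simp only [Finset.mem_range] at hj
    rcases le_or_gt j k with h | h
    · have := hA (k - j) (by omega)
      rwa [Nat.sub_sub_self h] at this
    · have := hB (j - k) (by omega)
      rwa [Nat.add_sub_cancel' h.le] at this
  have hsum : ∑ j ∈ Finset.range (n+1), t j = n ^ n := by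
    have h := add_pow k (n - k) n
    have hkn : k + (n - k) = n := by omega
    rw [hkn] at h
    rw [h]
    apply Finset.sum_congr rfl
    intro j _
    simp only [ht, Nat.cast_id]
    ring
  have hbound : n ^ n ≤ (n + 1) * t k := by
    rw [← hsum]
    calc ∑ j ∈ Finset.range (n+1), t j ≤ ∑ _j ∈ Finset.range (n+1), t k :=
          Finset.sum_le_sum hmax
      _ = (n+1) * t k := by rw [Finset.sum_const, Finset.card_range, smul_eq_mul]
  -- now move to ℝ
  have hn0 : (0:ℝ) < n := by exact_mod_cast hn
  have hsub : (1 : ℝ) - (k : ℝ) / n = ((n - k : ℕ) : ℝ) / n := by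
    rw [Nat.cast_sub hk]
    field_simp
  have hcast : ((n:ℝ) ^ n) ≤ ((n:ℝ) + 1) * ((n.choose k : ℝ) * (k:ℝ)^k * ((n-k:ℕ):ℝ)^(n-k)) := by
    have h : ((n ^ n : ℕ) : ℝ) ≤ (((n + 1) * t k : ℕ) : ℝ) := by exact_mod_cast hbound
    push_cast at h
    simpa [ht, mul_assoc, mul_comm, mul_left_comm] using h
  have hne : ((n:ℝ)^k * (n:ℝ)^(n-k)) = (n:ℝ)^n := by
    rw [← pow_add]
    congr 1
    omega
  have hRHS : (n.choose k : ℝ) * ((k:ℝ)^k / (n:ℝ)^k) * (((n-k:ℕ):ℝ)^(n-k) / (n:ℝ)^(n-k))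
      = ((n.choose k : ℝ) * (k:ℝ)^k * ((n-k:ℕ):ℝ)^(n-k)) / (n:ℝ)^n := by
    rw [← hne]
    field_simp
  rw [hsub, div_pow, div_pow, hRHS,
    div_le_div_iff₀ (by positivity) (by positivity), one_mul]
  linarith [hcast]
end

section
/- For every integer $m > 2$, $T^{(3)}(W^{(2)}(m)) < W^{(2)}(m+1)$, where $f^{(k)}$ denotes the $k$-fold composition of $f$. -/
/-- The tower function: `T 0 = 1`, `T (i+1) = 2 ^ T i`. -/
def towerT : ℕ → ℕ
  | 0 => 1
  | i + 1 => 2 ^ towerT i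

/-- The wowzer function: `W 0 = 1`, `W (n+1) = T (W n)`. -/
def wowzerW : ℕ → ℕ
  | 0 => 1
  | n + 1 => towerT (wowzerW n)

lemma lt_towerT (n : ℕ) : n < towerT n := by
  induction n with
  | zero => simp [towerT]
  | succ k ih =>
      calc k + 1 ≤ towerT k := ih
        _ < 2 ^ towerT k := Nat.lt_two_pow_self
        _ = towerT (k + 1) := rfl

lemma wowzerW_strictMono : StrictMono wowzerW := by
  apply strictMono_nat_of_lt_succ
  intro n
  exact lt_towerT (wowzerW n)

lemma self_le_wowzerW (n : ℕ) : n ≤ wowzerW n := wowzerW_strictMono.le_apply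

lemma add_three_lt_towerT (n : ℕ) (hn : 3 ≤ n) : n + 3 < towerT n := by
  obtain ⟨k, rfl⟩ := Nat.exists_eq_add_of_le hn
  induction k with
  | zero => norm_num [towerT]
  | succ j ih =>
      have h1 : 3 + j + 3 < towerT (3 + j) := ih (by omega)
      have h2 : towerT (3 + j) ≤ 2 ^ towerT (3 + j) := Nat.le_of_lt (Nat.lt_two_pow_self)
      have : 3 + (j + 1) + 3 ≤ towerT (3 + j) := by omega
      calc 3 + (j + 1) + 3 ≤ towerT (3 + j) := this
        _ < 2 ^ towerT (3 + j) := Nat.lt_two_pow_self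
        _ = towerT (3 + j + 1) := rfl
        _ = towerT (3 + (j + 1)) := by ring_nf

lemma towerT_cube_wowzerW (k : ℕ) :
    towerT (towerT (towerT (wowzerW k))) = wowzerW (k + 3) := by
  simp [wowzerW]

/-- For `m > 2`, `T^{(3)} (W^{(2)} m) < W^{(2)} (m + 1)`. -/
theorem tower_cube_wowzer_sq_lt (m : ℕ) (hm : 2 < m) :
    towerT^[3] (wowzerW^[2] m) < wowzerW^[2] (m + 1) := by
  have hW : wowzerW^[2] (m + 1) = wowzerW (towerT (wowzerW m)) := by
    simp [Function.iterate_succ, wowzerW]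
  have hT3 : towerT^[3] (wowzerW^[2] m) = wowzerW (wowzerW m + 3) := by
    simp [Function.iterate_succ, ← towerT_cube_wowzerW]
  rw [hW, hT3]
  apply wowzerW_strictMono
  exact add_three_lt_towerT (wowzerW m) (le_trans (by omega) (self_le_wowzerW m))
end

section
/- Let $\pi \in S_n$ with $n \ge 3$ and $2 \le k \le n-1$. Define $\pi_k = \mathrm{rk}(\pi(1),\dots,\pi(k))$ and $\pi_{k+1} = \mathrm{rk}(\pi(1),\dots,\pi(k+1))$, where $\mathrm{rk}$ replaces each entry by its rank in the sequence. Define, for a permutation $\sigma \in S_m$, $J_1(\sigma) = \min\{ j : \exists i, \{\sigma(i), \sigma(i)+1\} \subseteq \sigma[\{1,\dots,j\}] \}$ (with $\min \emptyset = \infty$). Then $J_1(\pi_k) \le J_1(\pi_{k+1})$. -/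
/-- The (1-based) rank sequence of a finite sequence of distinct numbers:
`rk x i` is the rank of `x i` among the values of `x`. -/
def rkSeq {k : ℕ} (x : Fin k → ℕ) : Fin k → ℕ :=
  fun i => (Finset.univ.filter fun j => x j < x i).card + 1

/-- `J₁(σ) = min { j : ∃ i, {σ(i), σ(i)+1} ⊆ σ[[j]] }`, with `min ∅ = ∞`.
Here `σ[[j]]` is the image of the first `j` positions. -/
noncomputable def J1 {m : ℕ} (σ : Fin m → ℕ) : ℕ∞ :=
  sInf {j : ℕ∞ | ∃ jn : ℕ, (jn : ℕ∞) = j ∧ ∃ i : Fin m,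
    (∃ a : Fin m, (a : ℕ) < jn ∧ σ a = σ i) ∧
    (∃ b : Fin m, (b : ℕ) < jn ∧ σ b = σ i + 1)}

namespace J1Aux

def cnt {m : ℕ} (x : Fin m → ℕ) (i : Fin m) : ℕ :=
  (Finset.univ.filter fun j => x j < x i).card

lemma cnt_lt_cnt {m : ℕ} {x : Fin m → ℕ} {a b : Fin m} (h : x a < x b) :
    cnt x a < cnt x b := by
  apply Finset.card_lt_card
  constructor
  · intro j hj
    simp only [Finset.mem_filter, Finset.mem_univ, true_and] at hj ⊢
    omega
  · intro hsub
    have := hsub (Finset.mem_filter.2 ⟨Finset.mem_univ a, h⟩)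
    simp only [Finset.mem_filter] at this
    omega

lemma lt_of_cnt_lt {m : ℕ} {x : Fin m → ℕ} {a b : Fin m} (h : cnt x a < cnt x b) :
    x a < x b := by
  rcases lt_trichotomy (x a) (x b) with h' | h' | h'
  · exact h'
  · simp [cnt, h'] at h
  · exact absurd (cnt_lt_cnt h') (by omega)

lemma cnt_lt_self {m : ℕ} (x : Fin m → ℕ) (i : Fin m) : cnt x i < m := by
  have : (Finset.univ.filter fun j => x j < x i) ⊆ Finset.univ.erase i := by
    intro j hj
    simp only [Finset.mem_filter, Finset.mem_univ, true_and] at hj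
    exact Finset.mem_erase.2 ⟨fun h => by simp [h] at hj, Finset.mem_univ j⟩
  have hm : 0 < m := i.pos
  have h1 := Finset.card_le_card this
  rw [Finset.card_erase_of_mem (Finset.mem_univ i), Finset.card_univ, Fintype.card_fin] at h1
  show (Finset.univ.filter fun j => x j < x i).card < m
  omega

lemma cnt_surj {m : ℕ} {x : Fin m → ℕ} (hx : Function.Injective x) (v : ℕ) (hv : v < m) :
    ∃ a : Fin m, cnt x a = v := by
  set C : Fin m → Fin m := fun a => ⟨cnt x a, cnt_lt_self x a⟩ with hC
  have hCi : Function.Injective C := by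
    intro a b hab
    have h : cnt x a = cnt x b := congrArg Fin.val hab
    by_contra hne
    rcases lt_trichotomy (x a) (x b) with h' | h' | h'
    · exact absurd (cnt_lt_cnt h') (by omega)
    · exact hne (hx h')
    · exact absurd (cnt_lt_cnt h') (by omega)
  have hCs := Finite.surjective_of_injective hCi
  obtain ⟨a, ha⟩ := hCs ⟨v, hv⟩
  exact ⟨a, congrArg Fin.val ha⟩

lemma cnt_castSucc {k : ℕ} (x' : Fin (k + 1) → ℕ) (i : Fin k) :
    cnt x' i.castSucc =
      cnt (fun j : Fin k => x' j.castSucc) i +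
        (if x' (Fin.last k) < x' i.castSucc then 1 else 0) := by
  unfold cnt
  rw [Finset.card_filter, Finset.card_filter, Fin.sum_univ_castSucc]

lemma key {k : ℕ} {x' : Fin (k + 1) → ℕ} (hx' : Function.Injective x') {a b : Fin k}
    (h : cnt x' b.castSucc = cnt x' a.castSucc + 1) :
    cnt (fun j : Fin k => x' j.castSucc) b = cnt (fun j : Fin k => x' j.castSucc) a + 1 := by
  have hab : x' a.castSucc < x' b.castSucc := lt_of_cnt_lt (by omega)
  set L := x' (Fin.last k) with hL
  have hLa : L ≠ x' a.castSucc := fun h =>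
    absurd (hx' h) (by simp [Fin.ext_iff]; omega)
  have hLb : L ≠ x' b.castSucc := fun h =>
    absurd (hx' h) (by simp [Fin.ext_iff]; omega)
  have hmid : ¬ (x' a.castSucc < L ∧ L < x' b.castSucc) := by
    rintro ⟨h1, h2⟩
    have c1 := cnt_lt_cnt (x := x') h1
    have c2 := cnt_lt_cnt (x := x') h2
    omega
  have hiff : (L < x' a.castSucc) ↔ (L < x' b.castSucc) := by
    constructor
    · intro h'; omega
    · intro h'
      by_contra h''
      exact hmid ⟨lt_of_le_of_ne (not_lt.1 h'') (Ne.symm hLa), h'⟩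
  have ea := cnt_castSucc x' a
  have eb := cnt_castSucc x' b
  by_cases hcase : L < x' a.castSucc
  · rw [if_pos hcase] at ea
    rw [if_pos (hiff.1 hcase)] at eb
    omega
  · rw [if_neg hcase] at ea
    rw [if_neg (fun h' => hcase (hiff.2 h'))] at eb
    omega

end J1Aux

open J1Aux in
/-- For `π ∈ Sₙ`, `n ≥ 3`, `2 ≤ k ≤ n-1`: `J₁(π_k) ≤ J₁(π_{k+1})`, where
`π_k = rk(π(1), …, π(k))`. -/
theorem J1_rank_prefix_mono (n : ℕ) (hn : 3 ≤ n) (k : ℕ) (hk2 : 2 ≤ k) (hk : k ≤ n - 1)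
    (π : Equiv.Perm (Fin n)) :
    J1 (rkSeq fun i : Fin k => ((π (Fin.castLE (by omega) i) : Fin n) : ℕ)) ≤
      J1 (rkSeq fun i : Fin (k + 1) => ((π (Fin.castLE (by omega) i) : Fin n) : ℕ)) := by
  set x' : Fin (k + 1) → ℕ := fun i => ((π (Fin.castLE (by omega) i) : Fin n) : ℕ) with hx'def
  have hxeq : (fun i : Fin k => ((π (Fin.castLE (by omega) i) : Fin n) : ℕ)) =
      fun j : Fin k => x' j.castSucc := by
    funext i
    simp only [hx'def]
    congr 2
  have hx'inj : Function.Injective x' := by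
    intro a b hab
    have h1 : π (Fin.castLE (by omega) a) = π (Fin.castLE (by omega) b) := Fin.ext hab
    have h2 := congrArg Fin.val (π.injective h1)
    exact Fin.ext h2
  set x : Fin k → ℕ := fun j : Fin k => x' j.castSucc with hxdef
  have hxinj : Function.Injective x := fun a b hab =>
    Fin.castSucc_injective k (hx'inj hab)
  rw [hxeq]
  apply le_sInf
  rintro t ⟨jn, rfl, i, ⟨a, ha, hae⟩, ⟨b, hb, hbe⟩⟩
  -- σ' b = σ' a + 1
  have hba : rkSeq x' b = rkSeq x' a + 1 := by rw [← hae] at hbe; exact hbe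
  have hcnt : cnt x' b = cnt x' a + 1 := by
    have h : cnt x' b + 1 = cnt x' a + 1 + 1 := hba
    omega
  rcases le_or_gt (jn : ℕ) k with hjk | hjk
  · -- transfer witness
    have hak : (a : ℕ) < k := lt_of_lt_of_le ha hjk
    have hbk : (b : ℕ) < k := lt_of_lt_of_le hb hjk
    set a0 : Fin k := ⟨a, hak⟩ with ha0
    set b0 : Fin k := ⟨b, hbk⟩ with hb0
    have hac : a0.castSucc = a := Fin.ext rfl
    have hbc : b0.castSucc = b := Fin.ext rfl
    have hkey : cnt x b0 = cnt x a0 + 1 := by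
      apply key hx'inj
      rw [hac, hbc]; exact hcnt
    have hr : rkSeq x b0 = rkSeq x a0 + 1 := by
      show cnt x b0 + 1 = cnt x a0 + 1 + 1
      omega
    apply sInf_le
    exact ⟨jn, rfl, a0, ⟨a0, ha, rfl⟩, ⟨b0, hb, hr⟩⟩
  · -- use ranks 1 and 2
    obtain ⟨a0, ha0⟩ := cnt_surj hxinj 0 (by omega)
    obtain ⟨b0, hb0⟩ := cnt_surj hxinj 1 (by omega)
    apply sInf_le
    refine ⟨jn, rfl, a0, ⟨a0, lt_of_lt_of_le a0.isLt (le_of_lt hjk), rfl⟩,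
      ⟨b0, lt_of_lt_of_le b0.isLt (le_of_lt hjk), ?_⟩⟩
    show cnt x b0 + 1 = cnt x a0 + 1 + 1
    omega
end

section
/- Let $q$ satisfy $0 < |1 - q| \le c n^{-4}$ for a constant $c > 0$, and for $1 \le i \le n$ let $Z_i \sim \mathrm{TGeo}(n-i+1, 1-q)$ and $X_i$ uniform on $\{1,\dots,n-i+1\}$. Then the total variation distance satisfies $d_{TV}(Z_i, X_i) = O(c n^{-3})$ as $n \to \infty$, uniformly in $i$. -/
lemma aux_pow_le_two {n j : ℕ} {q : ℝ} (hq : 0 ≤ q) (hqle : q ≤ 1 + 1/(2*n))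
    (hn : 1 ≤ n) (hj : j ≤ n) : q ^ j ≤ 2 := by
  have hn0 : (0:ℝ) < n := by exact_mod_cast hn
  have h1 : q ≤ Real.exp (1/(2*n)) := by
    have := Real.add_one_le_exp (1/(2*n)); linarith
  have h2 : q ^ j ≤ Real.exp (1/(2*n)) ^ j := pow_le_pow_left₀ hq h1 j
  have h3 : Real.exp (1/(2*n)) ^ j = Real.exp (j * (1/(2*n))) := by
    rw [← Real.exp_nat_mul]
  have h4 : (j:ℝ) * (1/(2*n)) ≤ 1/2 := by
    have hjn : (j:ℝ) ≤ n := by exact_mod_cast hj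
    rw [mul_one_div, div_le_div_iff₀ (by positivity) (by norm_num : (0:ℝ) < 2)]
    linarith
  have h5 : Real.exp ((j:ℝ) * (1/(2*n))) ≤ Real.exp (1/2) := Real.exp_le_exp.mpr h4
  have h6 : Real.exp (1/2) ≤ 2 := by
    have hsq : Real.exp (1/2) ^ 2 = Real.exp 1 := by
      rw [← Real.exp_nat_mul]; norm_num
    nlinarith [Real.exp_pos (1/2), Real.exp_one_lt_d9]
  calc q ^ j ≤ Real.exp (1/(2*n)) ^ j := h2
    _ = Real.exp ((j:ℝ) * (1/(2*n))) := h3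
    _ ≤ Real.exp (1/2) := h5
    _ ≤ 2 := h6

lemma aux_half_le_pow {n j : ℕ} {q : ℝ} (hq : 0 ≤ q) (hqge : 1 - 1/(2*n) ≤ q)
    (hn : 1 ≤ n) (hj : j ≤ n) : 1/2 ≤ q ^ j := by
  have hn0 : (0:ℝ) < n := by exact_mod_cast hn
  by_cases h1 : 1 ≤ q
  · have : 1 ≤ q ^ j := one_le_pow₀ h1
    linarith
  · push_neg at h1
    have hqn : q ^ n ≤ q ^ j := pow_le_pow_of_le_one hq h1.le hj
    have hber : 1 + (n:ℝ) * (q - 1) ≤ (1 + (q-1)) ^ n :=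
      one_add_mul_le_pow (by linarith) n
    have heq : (1 + (q-1)) ^ n = q ^ n := by ring_nf
    have hkey : (n:ℝ) * (1 - q) ≤ 1/2 := by
      have h2 : 1 - q ≤ 1/(2*n) := by linarith
      have := mul_le_mul_of_nonneg_left h2 hn0.le
      have hne : (n:ℝ) * (1/(2*n)) = 1/2 := by field_simp
      linarith
    have : 1/2 ≤ q ^ n := by rw [← heq]; nlinarith
    linarith

lemma aux_abs_pow_sub_one {n a : ℕ} {q : ℝ} (hq : 0 ≤ q) (hqle : q ≤ 1 + 1/(2*n))
    (hn : 1 ≤ n) (ha : a ≤ n) : |q ^ a - 1| ≤ 2 * n * |1 - q| := by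
  have hgs := geom_sum_mul q a
  have h1 : q ^ a - 1 = (∑ j ∈ Finset.range a, q ^ j) * (q - 1) := hgs.symm
  rw [h1, abs_mul]
  have hs1 : |∑ j ∈ Finset.range a, q ^ j| ≤ 2 * n := by
    rw [abs_of_nonneg (Finset.sum_nonneg fun j _ => pow_nonneg hq j)]
    calc ∑ j ∈ Finset.range a, q ^ j ≤ ∑ _j ∈ Finset.range a, (2:ℝ) :=
          Finset.sum_le_sum fun j hj =>
            aux_pow_le_two hq hqle hn (le_trans (Finset.mem_range.mp hj).le ha)
      _ = 2 * a := by rw [Finset.sum_const, Finset.card_range]; ring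
      _ ≤ 2 * n := by
          have han : (a:ℝ) ≤ n := by exact_mod_cast ha
          linarith
  have hqabs : |q - 1| = |1 - q| := abs_sub_comm q 1
  rw [hqabs]
  have : (0:ℝ) ≤ |1 - q| := abs_nonneg _
  nlinarith

/-- For `0 < |1-q| ≤ c n⁻⁴`, the total variation distance between
`TGeo(n-i+1, 1-q)` and the uniform distribution on `{1,…,n-i+1}` is `O(c n⁻³)`,
uniformly in `1 ≤ i ≤ n`. -/
theorem tv_truncGeom_uniform_bound (c : ℝ) (hc : 0 < c) :
    ∃ C > 0, ∃ n₀ : ℕ, ∀ n : ℕ, n₀ ≤ n → ∀ q : ℝ, 0 < q → q ≠ 1 →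
      |1 - q| ≤ c / (n : ℝ) ^ 4 → ∀ i : ℕ, 1 ≤ i → i ≤ n →
        (1 / 2) * ∑ k ∈ Finset.Icc 1 (n - i + 1),
            |(1 - q) * q ^ (k - 1) / (1 - q ^ (n - i + 1)) - 1 / ((n : ℝ) - i + 1)|
          ≤ C * c / (n : ℝ) ^ 3 := by
  refine ⟨4, by norm_num, ⌈2*c⌉₊ + 1, ?_⟩
  intro n hn q hq hq1 hqc i hi1 hin
  set m := n - i + 1 with hm
  have hm1 : 1 ≤ m := Nat.le_add_left 1 (n - i)
  have hmn : m ≤ n := by omega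
  have hn1 : 1 ≤ n := hi1.trans hin
  have hnR : (1:ℝ) ≤ n := by exact_mod_cast hn1
  have hnpos : (0:ℝ) < n := by linarith
  have hmR : (1:ℝ) ≤ m := by exact_mod_cast hm1
  have hmpos : (0:ℝ) < m := by linarith
  have hmnR : (m:ℝ) ≤ n := by exact_mod_cast hmn
  have h2c : 2*c ≤ n := by
    have h1 : (⌈2*c⌉₊:ℝ) ≤ n := by exact_mod_cast Nat.le_of_succ_le hn
    linarith [Nat.le_ceil (2*c)]
  have hε : |1 - q| ≤ 1/(2*n) := by
    refine le_trans hqc ?_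
    rw [div_le_div_iff₀ (by positivity) (by positivity)]
    nlinarith [sq_nonneg ((n:ℝ) - 1), sq_nonneg ((n:ℝ)^2 - n)]
  have hqle : q ≤ 1 + 1/(2*n) := by
    have := abs_le.mp hε; linarith [this.1]
  have hqge : 1 - 1/(2*n) ≤ q := by
    have := abs_le.mp hε; linarith [this.2]
  have hcast : ((m:ℕ):ℝ) = (n:ℝ) - i + 1 := by
    rw [hm]; push_cast [Nat.cast_sub hin]; ring
  rw [show (n:ℝ) - i + 1 = (m:ℝ) from hcast.symm]
  set S := ∑ j ∈ Finset.range m, q ^ j with hS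
  have h1q : (1:ℝ) - q ≠ 0 := sub_ne_zero_of_ne (Ne.symm hq1)
  have hSq : 1 - q ^ m = (1 - q) * S := by
    have := geom_sum_mul q m
    rw [hS]; linear_combination this
  have hShalf : (m:ℝ)/2 ≤ S := by
    rw [hS]
    calc (m:ℝ)/2 = ∑ _j ∈ Finset.range m, (1/2 : ℝ) := by
          rw [Finset.sum_const, Finset.card_range, nsmul_eq_mul]; push_cast; ring
      _ ≤ ∑ j ∈ Finset.range m, q ^ j :=
          Finset.sum_le_sum fun j hj =>
            aux_half_le_pow hq.le hqge hn1 (le_trans (Finset.mem_range.mp hj).le hmn)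
  have hSpos : (0:ℝ) < S := by linarith
  have hterm : ∀ k ∈ Finset.Icc 1 m,
      |(1 - q) * q ^ (k - 1) / (1 - q ^ m) - 1 / (m:ℝ)| ≤ 8*n*|1-q|/m := by
    intro k hk
    have hkm : k ≤ m := (Finset.mem_Icc.mp hk).2
    have hk1n : k - 1 ≤ n := by omega
    rw [hSq, mul_div_mul_left _ _ h1q]
    rw [div_sub_div _ _ (ne_of_gt hSpos) (ne_of_gt hmpos), mul_one]
    rw [abs_div, abs_of_pos (by positivity : (0:ℝ) < S * m)]
    have hnum : |q ^ (k-1) * m - S| ≤ 4*m*n*|1-q| := by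
      have heq : q ^ (k-1) * (m:ℝ) - S = ∑ j ∈ Finset.range m, (q ^ (k-1) - q ^ j) := by
        rw [hS, Finset.sum_sub_distrib, Finset.sum_const, Finset.card_range, nsmul_eq_mul]
        ring
      rw [heq]
      calc |∑ j ∈ Finset.range m, (q ^ (k-1) - q ^ j)|
          ≤ ∑ j ∈ Finset.range m, |q ^ (k-1) - q ^ j| := Finset.abs_sum_le_sum_abs _ _
        _ ≤ ∑ _j ∈ Finset.range m, (4*n*|1-q|) := by
            refine Finset.sum_le_sum fun j hj => ?_
            have hjn : j ≤ n := le_trans (Finset.mem_range.mp hj).le hmn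
            have h1 := aux_abs_pow_sub_one hq.le hqle hn1 hk1n
            have h2 := aux_abs_pow_sub_one hq.le hqle hn1 hjn
            calc |q ^ (k-1) - q ^ j| = |(q ^ (k-1) - 1) - (q ^ j - 1)| := by ring_nf
              _ ≤ |q ^ (k-1) - 1| + |q ^ j - 1| := abs_sub _ _
              _ ≤ 4*n*|1-q| := by linarith
        _ = m * (4*n*|1-q|) := by rw [Finset.sum_const, Finset.card_range, nsmul_eq_mul]
        _ = 4*m*n*|1-q| := by ring
    calc |q ^ (k-1) * m - S| / (S * m)
        ≤ (4*m*n*|1-q|) / ((m:ℝ)*m/2) := by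
          refine div_le_div₀ (by positivity) hnum (by positivity) ?_
          nlinarith
      _ = 8*n*|1-q|/m := by field_simp; ring
  have hsum : ∑ k ∈ Finset.Icc 1 m,
      |(1 - q) * q ^ (k - 1) / (1 - q ^ m) - 1 / (m:ℝ)| ≤ 8*n*|1-q| := by
    calc ∑ k ∈ Finset.Icc 1 m, |(1 - q) * q ^ (k - 1) / (1 - q ^ m) - 1 / (m:ℝ)|
        ≤ ∑ _k ∈ Finset.Icc 1 m, (8*n*|1-q|/m) := Finset.sum_le_sum hterm
      _ = m * (8*n*|1-q|/m) := by
          rw [Finset.sum_const, Nat.card_Icc, nsmul_eq_mul]; norm_num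
      _ = 8*n*|1-q| := by field_simp
  have hfinal : 8*(n:ℝ)*|1-q| ≤ 8*c/(n:ℝ)^3 := by
    have h1 : 8*(n:ℝ)*|1-q| ≤ 8*n*(c/(n:ℝ)^4) := by
      have := mul_le_mul_of_nonneg_left hqc (by positivity : (0:ℝ) ≤ 8*n)
      linarith
    have h2 : 8*(n:ℝ)*(c/(n:ℝ)^4) = 8*c/(n:ℝ)^3 := by
      field_simp
    linarith
  calc (1/2 : ℝ) * ∑ k ∈ Finset.Icc 1 m,
        |(1 - q) * q ^ (k - 1) / (1 - q ^ m) - 1 / (m:ℝ)|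
      ≤ (1/2) * (8*n*|1-q|) := mul_le_mul_of_nonneg_left hsum (by norm_num)
    _ ≤ (1/2) * (8*c/(n:ℝ)^3) := mul_le_mul_of_nonneg_left hfinal (by norm_num)
    _ = 4 * c / (n:ℝ)^3 := by ring
end
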